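/- Let p ≥ 5 be a prime and let s, t : (ℤ/pℤ) ∖ {0} → ℂ satisfy s_{−a} = −s_a, t_{−a} = t_a, and the quadratic relations s_a s_b + s_b s_c + s_c s_a + t_a + t_b + t_c = 0 for all nonzero a, b, c with a + b + c = 0. Then there exists a unique family of formal power series f_a ∈ ℂ[[z]], indexed by a ∈ (ℤ/pℤ) ∖ {0}, such that for every a: the constant coefficient of f_a is s_a, the coefficient of z in f_a is t_a, and −1 + z² f_a′ = −(1/(p−2)) ( Σ_{k≠0,a} (1 + z f_k)(1 + z f_{a−k}) + 2 s_a z (1 + z f_a) ), where f_a′ denotes the formal derivative of f_a. (Equivalently, the Laurent series r̂_a = 1/z + f_a satisfy d r̂_a/dz = −(1/(p−2))( Σ_{k≠0,a} r̂_k r̂_{a−k} + 2 r̂_a s_a ).) -/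

import Mathlib

open Finset PowerSeries

/-- A family `f` of formal power series (indexed by the nonzero residues mod p) is a
*standard solution* for the data `(s, t)` if each `f a` has constant coefficient `s a`,
coefficient of `z` equal to `t a`, and the family satisfies (as an identity in ℂ[[z]])
`−1 + z² f_a′ = −(1/(p−2)) ( Σ_{k≠0,a} (1 + z f_k)(1 + z f_{a−k}) + 2 s_a z (1 + z f_a) )`.
Equivalently, the Laurent series `r̂_a = 1/z + f_a` satisfy
`d r̂_a/dz = −(1/(p−2))( Σ_{k≠0,a} r̂_k r̂_{a−k} + 2 r̂_a s_a )`. -/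
def IsStandardSolution (p : ℕ) [NeZero p] (s t : ZMod p → ℂ)
    (f : ZMod p → PowerSeries ℂ) : Prop :=
  ∀ a : ZMod p, a ≠ 0 →
    PowerSeries.constantCoeff (R := ℂ) (f a) = s a ∧
    PowerSeries.coeff (R := ℂ) 1 (f a) = t a ∧
    -1 + PowerSeries.X ^ 2 * PowerSeries.derivative ℂ (f a) =
      PowerSeries.C (R := ℂ) (-(1 / ((p : ℂ) - 2))) *
        ((∑ k ∈ univ.filter (fun k : ZMod p => k ≠ 0 ∧ k ≠ a),
            (1 + PowerSeries.X * f k) * (1 + PowerSeries.X * f (a - k))) +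
          2 * PowerSeries.C (R := ℂ) (s a) * PowerSeries.X * (1 + PowerSeries.X * f a))

namespace S8

variable {p : ℕ} [NeZero p]

def T (a : ZMod p) : Finset (ZMod p) := univ.filter (fun k : ZMod p => k ≠ 0 ∧ k ≠ a)

lemma mem_T {a k : ZMod p} : k ∈ T a ↔ k ≠ 0 ∧ k ≠ a := by simp [T]

lemma card_T {a : ZMod p} (ha : a ≠ 0) : (T a).card = p - 2 := by
  have : T a = (univ : Finset (ZMod p)) \ {0, a} := by
    ext k; simp [mem_T, and_comm]
  rw [this, card_sdiff_of_subset (by simp)]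
  rw [card_univ, ZMod.card]
  congr 1
  rw [card_insert_of_notMem (by simp [Ne.symm ha]), card_singleton]

lemma sum_T_reflect {M : Type*} [AddCommMonoid M] (a : ZMod p) (g : ZMod p → M) :
    ∑ k ∈ T a, g (a - k) = ∑ k ∈ T a, g k := by
  apply Finset.sum_nbij' (fun k => a - k) (fun k => a - k)
  · intro k hk; rw [mem_T] at hk ⊢; constructor
    · intro h; exact hk.2 (by rwa [sub_eq_zero, eq_comm] at h)
    · intro h; exact hk.1 (by simpa using h)
  · intro k hk; rw [mem_T] at hk ⊢; constructor
    · intro h; exact hk.2 (by rwa [sub_eq_zero, eq_comm] at h)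
    · intro h; exact hk.1 (by simpa using h)
  · intro k _; ring
  · intro k _; ring
  · intro k _; rfl

lemma filter_ne_eq_insert {a : ZMod p} (ha : a ≠ 0) :
    univ.filter (fun k : ZMod p => k ≠ 0) = insert a (T a) := by
  ext k
  simp only [mem_filter, mem_univ, true_and, mem_insert, mem_T]
  by_cases hk : k = a
  · simp [hk, ha]
  · simp [hk]

lemma not_mem_T_self (a : ZMod p) : a ∉ T a := by simp [mem_T]

lemma sum_T_eq {M : Type*} [AddCommGroup M] {a : ZMod p} (ha : a ≠ 0) (g : ZMod p → M) :
    ∑ k ∈ T a, g k = (∑ k ∈ univ.filter (fun k : ZMod p => k ≠ 0), g k) - g a := by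
  rw [filter_ne_eq_insert ha, Finset.sum_insert (not_mem_T_self a)]
  abel

lemma card_filter_ne : (univ.filter (fun k : ZMod p => k ≠ 0)).card = p - 1 := by
  have : univ.filter (fun k : ZMod p => k ≠ 0) = (univ : Finset (ZMod p)) \ {0} := by
    ext k; simp
  rw [this, card_sdiff_of_subset (by simp), card_univ, ZMod.card, card_singleton]

lemma sum_odd_zero (s : ZMod p → ℂ)
    (hodd : ∀ a : ZMod p, a ≠ 0 → s (-a) = - s a) :
    ∑ k ∈ univ.filter (fun k : ZMod p => k ≠ 0), s k = 0 := by
  have h1 : ∑ k ∈ univ.filter (fun k : ZMod p => k ≠ 0), s k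
      = ∑ k ∈ univ.filter (fun k : ZMod p => k ≠ 0), s (-k) := by
    apply Finset.sum_equiv (Equiv.neg (ZMod p))
    · intro k; simp
    · intro k hk; simp
  have h2 : ∑ k ∈ univ.filter (fun k : ZMod p => k ≠ 0), s (-k)
      = - ∑ k ∈ univ.filter (fun k : ZMod p => k ≠ 0), s k := by
    rw [← Finset.sum_neg_distrib]
    apply Finset.sum_congr rfl
    intro k hk
    simp only [mem_filter, mem_univ, true_and] at hk
    exact hodd k hk
  have := h1.trans h2
  linear_combination this / 2

lemma sum_T_s (s : ZMod p → ℂ)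
    (hodd : ∀ a : ZMod p, a ≠ 0 → s (-a) = - s a) {a : ZMod p} (ha : a ≠ 0) :
    ∑ k ∈ T a, s k = - s a := by
  rw [sum_T_eq ha, sum_odd_zero s hodd]; ring

lemma cast_card_T (hp5 : 5 ≤ p) {a : ZMod p} (ha : a ≠ 0) :
    (((T a).card : ℂ)) = (p : ℂ) - 2 := by
  rw [card_T ha]
  push_cast [Nat.cast_sub (by omega : 2 ≤ p)]
  ring

lemma cast_card_filter_ne (hp5 : 5 ≤ p) :
    (((univ.filter (fun k : ZMod p => k ≠ 0)).card : ℂ)) = (p : ℂ) - 1 := by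
  rw [card_filter_ne]
  push_cast [Nat.cast_sub (by omega : 1 ≤ p)]
  ring

lemma quad_sum (hp5 : 5 ≤ p) (s t : ZMod p → ℂ)
    (hodd : ∀ a : ZMod p, a ≠ 0 → s (-a) = - s a)
    (heven : ∀ a : ZMod p, a ≠ 0 → t (-a) = t a)
    (hquad : ∀ a b c : ZMod p, a ≠ 0 → b ≠ 0 → c ≠ 0 → a + b + c = 0 →
      s a * s b + s b * s c + s c * s a + t a + t b + t c = 0)
    {a : ZMod p} (ha : a ≠ 0) :
    ((p : ℂ) - 2) * t a + 2 * ∑ k ∈ T a, t k + (∑ k ∈ T a, s k * s (a - k))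
      + 2 * s a * s a = 0 := by
  have key : ∀ k ∈ T a,
      (- (s a * s k) + s k * s (a - k) - s (a - k) * s a + t a + t k + t (a - k)) = 0 := by
    intro k hk
    obtain ⟨hk0, hka⟩ := mem_T.mp hk
    have h := hquad (-a) k (a - k) (neg_ne_zero.mpr ha) hk0
      (sub_ne_zero.mpr (Ne.symm hka)) (by ring)
    rw [hodd a ha, heven a ha] at h
    linear_combination h
  have H : ∑ k ∈ T a,
      (- (s a * s k) + s k * s (a - k) - s (a - k) * s a + t a + t k + t (a - k)) = 0 :=
    Finset.sum_eq_zero key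
  have e1 : ∑ k ∈ T a, s (a - k) = - s a := by
    rw [sum_T_reflect a s]; exact sum_T_s s hodd ha
  have e2 : ∑ k ∈ T a, t (a - k) = ∑ k ∈ T a, t k := sum_T_reflect a t
  have e3 : ∑ k ∈ T a, s k = - s a := sum_T_s s hodd ha
  simp only [Finset.sum_add_distrib, Finset.sum_sub_distrib, Finset.sum_neg_distrib] at H
  rw [← Finset.mul_sum, ← Finset.sum_mul, e1, e2, e3, Finset.sum_const,
    nsmul_eq_mul, cast_card_T hp5 ha] at H
  linear_combination H

noncomputable def brkt (s : ZMod p → ℂ) (f : ZMod p → PowerSeries ℂ) (a : ZMod p) :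
    PowerSeries ℂ :=
  (∑ k ∈ T a, (1 + X * f k) * (1 + X * f (a - k))) + 2 * C (R := ℂ) (s a) * X * (1 + X * f a)

lemma brkt_eq (hp5 : 5 ≤ p) (s : ZMod p → ℂ) (f : ZMod p → PowerSeries ℂ) (a : ZMod p)
    (ha : a ≠ 0) :
    brkt s f a = C (R := ℂ) ((p : ℂ) - 2)
      + X * (C (R := ℂ) 2 * ∑ k ∈ T a, f k + C (R := ℂ) (2 * s a))
      + X ^ 2 * ((∑ k ∈ T a, f k * f (a - k)) + C (R := ℂ) (2 * s a) * f a) := by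
  have h1 : ∀ k ∈ T a, (1 + X * f k) * (1 + X * f (a - k))
      = 1 + X * f k + X * f (a - k) + X ^ 2 * (f k * f (a - k)) := by intros; ring
  have h2 : (2 : PowerSeries ℂ) = C (R := ℂ) 2 := (map_ofNat (C (R := ℂ)) 2).symm
  have h3 : ((T a).card : PowerSeries ℂ) = C (R := ℂ) ((p : ℂ) - 2) := by
    rw [card_T ha]
    rw [show ((p - 2 : ℕ) : PowerSeries ℂ) = C (R := ℂ) ((p - 2 : ℕ) : ℂ) from by simp]
    congr 1
    push_cast [Nat.cast_sub (by omega : 2 ≤ p)]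
    ring
  rw [brkt, Finset.sum_congr rfl h1]
  simp only [Finset.sum_add_distrib, ← Finset.mul_sum, Finset.sum_const, nsmul_eq_mul, mul_one]
  rw [sum_T_reflect a f, h3, map_mul, ← h2]
  ring

lemma hpc (hp5 : 5 ≤ p) : ((p : ℂ) - 2) ≠ 0 := by
  have h : (p : ℂ) ≠ 2 := by exact_mod_cast (by omega : p ≠ 2)
  exact sub_ne_zero.mpr h

section coeffs

variable (α β : ℂ) (B D : PowerSeries ℂ)

lemma coeffR0 : coeff (R := ℂ) 0 (C (R := ℂ) α * (C (R := ℂ) β + X * B + X ^ 2 * D)) = α * β := by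
  rw [coeff_C_mul, map_add, map_add, coeff_C, coeff_zero_X_mul, pow_two, mul_assoc,
    coeff_zero_X_mul]
  simp

lemma coeffR1 : coeff (R := ℂ) 1 (C (R := ℂ) α * (C (R := ℂ) β + X * B + X ^ 2 * D)) = α * coeff (R := ℂ) 0 B := by
  rw [coeff_C_mul, map_add, map_add, coeff_C, pow_two, mul_assoc]
  rw [coeff_succ_X_mul 0 B, coeff_succ_X_mul 0 (X * D), coeff_zero_X_mul]
  simp

lemma coeffRn (n : ℕ) : coeff (R := ℂ) (n + 2) (C (R := ℂ) α * (C (R := ℂ) β + X * B + X ^ 2 * D))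
    = α * (coeff (R := ℂ) (n + 1) B + coeff (R := ℂ) n D) := by
  rw [coeff_C_mul, map_add, map_add, coeff_C]
  rw [coeff_succ_X_mul (n + 1) B, coeff_X_pow_mul D 2 n]
  simp

lemma coeffL0 (g : PowerSeries ℂ) :
    coeff (R := ℂ) 0 (-1 + X ^ 2 * derivative ℂ g) = -1 := by
  rw [map_add, map_neg, pow_two, mul_assoc, coeff_zero_X_mul, coeff_zero_one]
  ring

lemma coeffL1 (g : PowerSeries ℂ) :
    coeff (R := ℂ) 1 (-1 + X ^ 2 * derivative ℂ g) = 0 := by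
  rw [map_add, map_neg, pow_two, mul_assoc, coeff_succ_X_mul 0 (X * _), coeff_zero_X_mul,
    coeff_one]
  simp

lemma coeffLn (g : PowerSeries ℂ) (n : ℕ) :
    coeff (R := ℂ) (n + 2) (-1 + X ^ 2 * derivative ℂ g) = coeff (R := ℂ) (n + 1) g * (n + 1) := by
  rw [map_add, map_neg, coeff_X_pow_mul _ 2 n, coeff_one, coeff_derivative]
  simp

end coeffs

lemma key (hp5 : 5 ≤ p) (s : ZMod p → ℂ) (f : ZMod p → PowerSeries ℂ) (a : ZMod p)
    (ha : a ≠ 0) :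
    (-1 + X ^ 2 * derivative ℂ (f a) = C (R := ℂ) (-(1 / ((p : ℂ) - 2))) * brkt s f a)
    ↔ ((∑ k ∈ T a, coeff (R := ℂ) 0 (f k)) + s a = 0 ∧
      ∀ n : ℕ, ((p : ℂ) - 2) * (n + 1) * coeff (R := ℂ) (n + 1) (f a)
        + 2 * ∑ k ∈ T a, coeff (R := ℂ) (n + 1) (f k)
        + (∑ k ∈ T a, ∑ x ∈ antidiagonal n, coeff (R := ℂ) x.1 (f k) * coeff (R := ℂ) x.2 (f (a - k)))
        + 2 * s a * coeff (R := ℂ) n (f a) = 0) := by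
  have hq := hpc hp5
  set α : ℂ := -(1 / ((p : ℂ) - 2)) with hα
  set B : PowerSeries ℂ := C (R := ℂ) 2 * ∑ k ∈ T a, f k + C (R := ℂ) (2 * s a) with hB
  set D : PowerSeries ℂ := (∑ k ∈ T a, f k * f (a - k)) + C (R := ℂ) (2 * s a) * f a with hD
  have hB' : ∀ m : ℕ, coeff (R := ℂ) m B
      = 2 * ∑ k ∈ T a, coeff (R := ℂ) m (f k) + (if m = 0 then 2 * s a else 0) := by
    intro m
    rw [hB, map_add, coeff_C_mul, map_sum, coeff_C]
  have hD' : ∀ m : ℕ, coeff (R := ℂ) m D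
      = (∑ k ∈ T a, ∑ x ∈ antidiagonal m, coeff (R := ℂ) x.1 (f k) * coeff (R := ℂ) x.2 (f (a - k)))
        + 2 * s a * coeff (R := ℂ) m (f a) := by
    intro m
    rw [hD, map_add, coeff_C_mul, map_sum]
    congr 1
    exact Finset.sum_congr rfl fun k _ => coeff_mul m (f k) (f (a - k))
  rw [brkt_eq hp5 s f a ha, PowerSeries.ext_iff]
  constructor
  · intro h
    constructor
    · have h1 := h 1
      rw [coeffL1, coeffR1, hB'] at h1
      simp only [if_pos rfl] at h1
      have h1' : (2 : ℂ) * ∑ k ∈ T a, coeff (R := ℂ) 0 (f k) + 2 * s a = 0 := by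
        by_contra hne
        have hαne : α ≠ 0 := by
          rw [hα]; simp [hq]
        exact hne (by
          rcases mul_eq_zero.mp h1.symm with h' | h'
          · exact absurd h' hαne
          · exact h')
      linear_combination h1' / 2
    · intro n
      have h2 := h (n + 2)
      rw [coeffLn, coeffRn, hB', hD'] at h2
      simp only [Nat.succ_ne_zero, if_false, add_zero] at h2
      have h3 : ((p : ℂ) - 2) * (coeff (R := ℂ) (n + 1) (f a) * (n + 1))
          = ((p : ℂ) - 2) * (α * (2 * ∑ k ∈ T a, coeff (R := ℂ) (n + 1) (f k)
            + ((∑ k ∈ T a, ∑ x ∈ antidiagonal n, coeff (R := ℂ) x.1 (f k) * coeff (R := ℂ) x.2 (f (a - k)))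
              + 2 * s a * coeff (R := ℂ) n (f a)))) := by rw [h2]
      rw [hα] at h3
      field_simp at h3
      linear_combination h3
  · rintro ⟨h1, h2⟩ n
    match n with
    | 0 =>
      rw [coeffL0, coeffR0, hα]
      field_simp
    | 1 =>
      rw [coeffL1, coeffR1, hB', if_pos rfl]
      linear_combination (-2 * α) * h1
    | (n + 2) =>
      rw [coeffLn, coeffRn, hB', hD']
      simp only [Nat.succ_ne_zero, if_false, add_zero, hα]
      have h4 := h2 n
      field_simp
      linear_combination h4

/-- the inhomogeneous term in the linear system determining the coefficients of degree n+2 -/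
noncomputable def Lv (p : ℕ) [NeZero p] (s : ZMod p → ℂ) (c : ℕ → ZMod p → ℂ)
    (n : ℕ) (b : ZMod p) : ℂ :=
  (∑ k ∈ T b, ∑ x ∈ antidiagonal (n + 1), c x.1 k * c x.2 (b - k)) + 2 * s b * c (n + 1) b

noncomputable def cf (p : ℕ) [NeZero p] (s t : ZMod p → ℂ) : ℕ → ZMod p → ℂ
  | 0 => s
  | 1 => t
  | n + 2 =>
    let c : ℕ → ZMod p → ℂ := fun i a => if h : i < n + 2 then cf p s t i a else 0
    fun a => (-(Lv p s c n a)
      + 2 * ((∑ b ∈ univ.filter (fun b : ZMod p => b ≠ 0), Lv p s c n b)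
          / (((p : ℂ) - 2) * ((n : ℂ) + 4))))
      / (((p : ℂ) - 2) * ((n : ℂ) + 2) - 2)

lemma cf_zero (s t : ZMod p → ℂ) : cf p s t 0 = s := by rw [cf]

lemma cf_one (s t : ZMod p → ℂ) : cf p s t 1 = t := by rw [cf]

lemma Lv_congr (s : ZMod p → ℂ) (c c' : ℕ → ZMod p → ℂ) (n : ℕ) (b : ZMod p)
    (h : ∀ i ≤ n + 1, ∀ a, c i a = c' i a) : Lv p s c n b = Lv p s c' n b := by
  unfold Lv
  congr 1
  · apply Finset.sum_congr rfl
    intro k _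
    apply Finset.sum_congr rfl
    intro x hx
    have hx' := Finset.HasAntidiagonal.mem_antidiagonal.mp hx
    rw [h x.1 (by omega) k, h x.2 (by omega) (b - k)]
  · rw [h (n + 1) le_rfl b]

lemma cf_succ (s t : ZMod p → ℂ) (n : ℕ) (a : ZMod p) :
    cf p s t (n + 2) a = (-(Lv p s (cf p s t) n a)
      + 2 * ((∑ b ∈ univ.filter (fun b : ZMod p => b ≠ 0), Lv p s (cf p s t) n b)
          / (((p : ℂ) - 2) * ((n : ℂ) + 4))))
      / (((p : ℂ) - 2) * ((n : ℂ) + 2) - 2) := by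
  rw [cf]
  dsimp only
  have hc : ∀ i ≤ n + 1, ∀ b : ZMod p,
      (fun i a => if h : i < n + 2 then cf p s t i a else 0) i b = cf p s t i b := by
    intro i hi b
    simp only [dif_pos (by omega : i < n + 2)]
  rw [Lv_congr s _ _ n a hc]
  rw [Finset.sum_congr rfl fun b _ => Lv_congr s _ _ n b hc]

lemma D1_ne (hp5 : 5 ≤ p) (n : ℕ) : ((p : ℂ) - 2) * ((n : ℂ) + 2) - 2 ≠ 0 := by
  have h1 : (2 : ℕ) ≤ p := by omega
  have h2 : 6 ≤ (p - 2) * (n + 2) :=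
    Nat.mul_le_mul (by omega : 3 ≤ p - 2) (by omega : 2 ≤ n + 2)
  have e : ((p : ℂ) - 2) * ((n : ℂ) + 2) - 2 = (((p - 2) * (n + 2) - 2 : ℕ) : ℂ) := by
    push_cast [Nat.cast_sub (by omega : 2 ≤ (p - 2) * (n + 2)), Nat.cast_sub h1]
    ring
  rw [e]
  exact Nat.cast_ne_zero.mpr (by omega)

lemma D2_ne (hp5 : 5 ≤ p) (n : ℕ) : ((p : ℂ) - 2) * ((n : ℂ) + 4) ≠ 0 := by
  refine mul_ne_zero (hpc hp5) ?_
  have : ((n + 4 : ℕ) : ℂ) ≠ 0 := Nat.cast_ne_zero.mpr (by omega)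
  push_cast at this
  exact this

lemma cf_S (hp5 : 5 ≤ p) (s t : ZMod p → ℂ) (n : ℕ) :
    ∑ b ∈ univ.filter (fun b : ZMod p => b ≠ 0), cf p s t (n + 2) b
      = -(∑ b ∈ univ.filter (fun b : ZMod p => b ≠ 0), Lv p s (cf p s t) n b)
        / (((p : ℂ) - 2) * ((n : ℂ) + 4)) := by
  have hd1 := D1_ne hp5 n
  have hd2 := D2_ne hp5 n
  rw [Finset.sum_congr rfl fun b _ => cf_succ s t n b]
  rw [← Finset.sum_div, Finset.sum_add_distrib, Finset.sum_neg_distrib, Finset.sum_const,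
    nsmul_eq_mul, cast_card_filter_ne hp5]
  have hq := hpc hp5
  have h4 : (n : ℂ) + 4 ≠ 0 := by have := D2_ne hp5 n; exact right_ne_zero_of_mul this
  field_simp
  ring

lemma cf_K (hp5 : 5 ≤ p) (s t : ZMod p → ℂ) (n : ℕ) {a : ZMod p} (ha : a ≠ 0) :
    ((p : ℂ) - 2) * ((n : ℂ) + 2) * cf p s t (n + 2) a
      + 2 * ∑ k ∈ T a, cf p s t (n + 2) k + Lv p s (cf p s t) n a = 0 := by
  have hd1 := D1_ne hp5 n
  have hd2 := D2_ne hp5 n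
  rw [sum_T_eq ha (cf p s t (n + 2)), cf_S hp5 s t n, cf_succ s t n a]
  field_simp
  ring

end S8

open S8

/-- Under the symmetries and quadratic relations on (s, t), the standard
solution exists and is unique. -/
theorem statement8 (p : ℕ) (hp : p.Prime) (hp5 : 5 ≤ p) [NeZero p]
    (s t : ZMod p → ℂ)
    (hodd : ∀ a : ZMod p, a ≠ 0 → s (-a) = - s a)
    (heven : ∀ a : ZMod p, a ≠ 0 → t (-a) = t a)
    (hquad : ∀ a b c : ZMod p, a ≠ 0 → b ≠ 0 → c ≠ 0 → a + b + c = 0 →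
      s a * s b + s b * s c + s c * s a + t a + t b + t c = 0) :
    ∃ f : ZMod p → PowerSeries ℂ, IsStandardSolution p s t f ∧
      ∀ g : ZMod p → PowerSeries ℂ, IsStandardSolution p s t g →
        ∀ a : ZMod p, a ≠ 0 → g a = f a := by
  set f : ZMod p → PowerSeries ℂ := fun a => PowerSeries.mk (fun n => cf p s t n a) with hf
  have hcoef : ∀ n a, PowerSeries.coeff (R := ℂ) n (f a) = cf p s t n a := by
    intro n a; rw [hf]; exact PowerSeries.coeff_mk n _
  -- the solution property of `f`
  have hsol : IsStandardSolution p s t f := by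
    intro a ha
    refine ⟨?_, ?_, ?_⟩
    · rw [← PowerSeries.coeff_zero_eq_constantCoeff, hcoef, cf_zero]
    · rw [hcoef, cf_one]
    · show -1 + X ^ 2 * derivative ℂ (f a) = C (R := ℂ) (-(1 / ((p : ℂ) - 2))) * brkt s f a
      rw [key hp5 s f a ha]
      constructor
      · have : ∀ k ∈ T a, PowerSeries.coeff (R := ℂ) 0 (f k) = s k := by
          intro k _; rw [hcoef, cf_zero]
        rw [Finset.sum_congr rfl this, sum_T_s s hodd ha]
        ring
      · intro n
        match n with
        | 0 =>
          simp only [zero_add, hcoef, cf_one, Finset.Nat.antidiagonal_zero,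
            Finset.sum_singleton, cf_zero]
          have := quad_sum hp5 s t hodd heven hquad ha
          push_cast
          linear_combination this
        | (m + 1) =>
          have hK := cf_K hp5 s t m ha
          rw [Lv] at hK
          simp only [hcoef]
          push_cast
          linear_combination hK
  refine ⟨f, hsol, ?_⟩
  -- uniqueness
  intro g hg a ha
  have main : ∀ n, ∀ b : ZMod p, b ≠ 0 → PowerSeries.coeff (R := ℂ) n (g b) = cf p s t n b := by
    intro n
    induction n using Nat.strong_induction_on with
    | _ n ih =>
      match n with
      | 0 =>
        intro b hb
        rw [PowerSeries.coeff_zero_eq_constantCoeff, cf_zero]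
        exact (hg b hb).1
      | 1 =>
        intro b hb
        rw [cf_one]
        exact (hg b hb).2.1
      | (m + 2) =>
        -- linear relation for the difference u
        set u : ZMod p → ℂ := fun b => PowerSeries.coeff (R := ℂ) (m + 2) (g b) - cf p s t (m + 2) b
          with hu
        have hrel : ∀ b : ZMod p, b ≠ 0 →
            (((p : ℂ) - 2) * ((m : ℂ) + 2) - 2) * u b
              + 2 * (∑ c ∈ univ.filter (fun c : ZMod p => c ≠ 0), u c) = 0 := by
          intro b hb
          have hKg := ((key hp5 s g b hb).mp (hg b hb).2.2).2 (m + 1)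
          have hKf := cf_K hp5 s t m hb
          rw [Lv] at hKf
          -- rewrite lower coefficients with the induction hypothesis
          have e1 : ∑ k ∈ T b, ∑ x ∈ antidiagonal (m + 1),
              PowerSeries.coeff (R := ℂ) x.1 (g k) * PowerSeries.coeff (R := ℂ) x.2 (g (b - k))
              = ∑ k ∈ T b, ∑ x ∈ antidiagonal (m + 1),
                cf p s t x.1 k * cf p s t x.2 (b - k) := by
            apply Finset.sum_congr rfl
            intro k hk
            obtain ⟨hk0, hkb⟩ := mem_T.mp hk
            apply Finset.sum_congr rfl
            intro x hx
            have hx' := Finset.HasAntidiagonal.mem_antidiagonal.mp hx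
            rw [ih x.1 (by omega) k hk0,
              ih x.2 (by omega) (b - k) (sub_ne_zero.mpr (Ne.symm hkb))]
          have e2 : PowerSeries.coeff (R := ℂ) (m + 1) (g b) = cf p s t (m + 1) b :=
            ih (m + 1) (by omega) b hb
          rw [e1, e2] at hKg
          have e3 : ∑ k ∈ T b, u k
              = (∑ c ∈ univ.filter (fun c : ZMod p => c ≠ 0), u c) - u b :=
            sum_T_eq hb u
          have e4 : ∑ k ∈ T b, u k
              = (∑ k ∈ T b, PowerSeries.coeff (R := ℂ) (m + 2) (g k))
                - ∑ k ∈ T b, cf p s t (m + 2) k := by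
            rw [← Finset.sum_sub_distrib]
          have hub : u b = PowerSeries.coeff (R := ℂ) (m + 2) (g b) - cf p s t (m + 2) b := rfl
          push_cast at hKg
          linear_combination hKg - hKf - 2 * e3 + 2 * e4 + (((p : ℂ) - 2) * ((m : ℂ) + 2) - 2) * hub
        have hU : (∑ c ∈ univ.filter (fun c : ZMod p => c ≠ 0), u c) = 0 := by
          have h0 : ∑ b ∈ univ.filter (fun b : ZMod p => b ≠ 0),
              ((((p : ℂ) - 2) * ((m : ℂ) + 2) - 2) * u b
                + 2 * (∑ c ∈ univ.filter (fun c : ZMod p => c ≠ 0), u c)) = 0 := by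
            apply Finset.sum_eq_zero
            intro b hb
            simp only [mem_filter, mem_univ, true_and] at hb
            exact hrel b hb
          rw [Finset.sum_add_distrib, ← Finset.mul_sum, Finset.sum_const, nsmul_eq_mul,
            cast_card_filter_ne hp5] at h0
          have h5 : (((p : ℂ) - 2) * ((m : ℂ) + 4))
              * (∑ c ∈ univ.filter (fun c : ZMod p => c ≠ 0), u c) = 0 := by
            linear_combination h0
          rcases mul_eq_zero.mp h5 with h' | h'
          · exact absurd h' (D2_ne hp5 m)
          · exact h'
        intro b hb
        have h6 := hrel b hb
        rw [hU] at h6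
        have h7 : u b = 0 := by
          rcases mul_eq_zero.mp (by linear_combination h6 :
            ((((p : ℂ) - 2) * ((m : ℂ) + 2) - 2)) * u b = 0) with h' | h'
          · exact absurd h' (D1_ne hp5 m)
          · exact h'
        have : PowerSeries.coeff (R := ℂ) (m + 2) (g b) - cf p s t (m + 2) b = 0 := h7
        linear_combination this
  ext n
  rw [hcoef]
  exact main n a ha
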